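/- Suppose a sequence (u_s) of rationals satisfies ∑_{s=0}^∞ |u_{s+1} - u_s| ≤ c for some real c > 0. Then for every n ∈ ℕ, the number of non-overlapping index pairs (i, j), i < j, with |u_i - u_j| ≥ 2^{-n} is at most c · 2^n; in particular, every weakly effectively convergent sequence converges h-bounded effectively with h(n) = ⌈c⌉ · 2^n. -/

import Mathlib

open Filter Topology

theorem stmt15 (u : ℕ → ℚ) (c : ℝ) (hc : 0 < c)
    (hsum : ∀ N : ℕ, (∑ s ∈ Finset.range N, |(u (s + 1) : ℝ) - (u s : ℝ)|) ≤ c) :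
    ∀ n : ℕ, ∀ (k : ℕ) (p : Fin k → ℕ × ℕ),
      (∀ i, (p i).1 < (p i).2) →
      (∀ i, (2:ℝ) ^ (-(n : ℤ)) ≤ |(u (p i).1 : ℝ) - (u (p i).2 : ℝ)|) →
      (∀ i j, i ≠ j → (p i).2 ≤ (p j).1 ∨ (p j).2 ≤ (p i).1) →
      (k : ℝ) ≤ c * 2 ^ n ∧ k ≤ ⌈c⌉₊ * 2 ^ n := by
  intro n k p hlt hbig hdisj
  set d : ℕ → ℝ := fun s => |(u (s + 1) : ℝ) - (u s : ℝ)| with hd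
  -- choose N bounding all right endpoints
  have hkey : (k : ℝ) * (2:ℝ) ^ (-(n : ℤ)) ≤ c := by
    rcases Nat.eq_zero_or_pos k with hk0 | hk0
    · subst hk0; simpa using hc.le
    · set N : ℕ := (Finset.univ.sup fun i : Fin k => (p i).2) with hN
      have hsub : ∀ i : Fin k, Finset.Ico (p i).1 (p i).2 ⊆ Finset.range N := by
        intro i x hx
        rw [Finset.mem_Ico] at hx
        exact Finset.mem_range.2 (lt_of_lt_of_le hx.2
          (Finset.le_sup (f := fun i => (p i).2) (Finset.mem_univ i)))
      have hpair : ((Finset.univ : Finset (Fin k)) : Set (Fin k)).PairwiseDisjoint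
          fun i => Finset.Ico (p i).1 (p i).2 := by
        intro i _ j _ hij
        rcases hdisj i j hij with h | h
        · exact Finset.Ico_disjoint_Ico_consecutive (p i).1 (p i).2 (p j).2
            |>.mono_right (Finset.Ico_subset_Ico_left h)
        · exact (Finset.Ico_disjoint_Ico_consecutive (p j).1 (p j).2 (p i).2
            |>.mono_right (Finset.Ico_subset_Ico_left h)).symm
      have step1 : ∀ i : Fin k, (2:ℝ) ^ (-(n : ℤ)) ≤
          ∑ s ∈ Finset.Ico (p i).1 (p i).2, d s := by
        intro i
        refine (hbig i).trans ?_
        have htel : (∑ s ∈ Finset.Ico (p i).1 (p i).2,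
            ((u (s + 1) : ℝ) - (u s : ℝ))) = (u (p i).2 : ℝ) - (u (p i).1 : ℝ) := by
          rw [Finset.sum_Ico_eq_sub _ (hlt i).le,
            Finset.sum_range_sub (fun s => (u s : ℝ)),
            Finset.sum_range_sub (fun s => (u s : ℝ))]
          ring
        calc |(u (p i).1 : ℝ) - (u (p i).2 : ℝ)|
            = |∑ s ∈ Finset.Ico (p i).1 (p i).2, ((u (s + 1) : ℝ) - (u s : ℝ))| := by
              rw [htel, abs_sub_comm]
          _ ≤ ∑ s ∈ Finset.Ico (p i).1 (p i).2, d s :=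
              Finset.abs_sum_le_sum_abs _ _
      have hsum1 : (k : ℝ) * (2:ℝ) ^ (-(n : ℤ)) ≤
          ∑ i : Fin k, ∑ s ∈ Finset.Ico (p i).1 (p i).2, d s := by
        have := Finset.sum_le_sum (fun i (_ : i ∈ Finset.univ) => step1 i)
        simpa [Finset.sum_const, Finset.card_univ, mul_comm] using this
      have hsum2 : (∑ i : Fin k, ∑ s ∈ Finset.Ico (p i).1 (p i).2, d s) ≤
          ∑ s ∈ Finset.range N, d s := by
        rw [← Finset.sum_biUnion hpair]
        refine Finset.sum_le_sum_of_subset_of_nonneg ?_ ?_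
        · intro x hx
          rcases Finset.mem_biUnion.1 hx with ⟨i, _, hxi⟩
          exact hsub i hxi
        · intro x _ _; exact abs_nonneg _
      exact hsum1.trans (hsum2.trans (hsum N))
  have h2n : (0:ℝ) < (2:ℝ) ^ (-(n : ℤ)) := by positivity
  have h1 : (k : ℝ) ≤ c * 2 ^ n := by
    have : (2:ℝ) ^ (-(n : ℤ)) = ((2:ℝ) ^ n)⁻¹ := by
      rw [zpow_neg, zpow_natCast]
    rw [this] at hkey
    have h2 : (0:ℝ) < (2:ℝ) ^ n := by positivity
    calc (k : ℝ) = (k : ℝ) * ((2:ℝ)^n)⁻¹ * (2:ℝ)^n := by field_simp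
      _ ≤ c * 2 ^ n := by
          exact mul_le_mul_of_nonneg_right hkey h2.le
  refine ⟨h1, ?_⟩
  have h2 : (k : ℝ) ≤ (⌈c⌉₊ : ℝ) * 2 ^ n :=
    h1.trans (mul_le_mul_of_nonneg_right (Nat.le_ceil c) (by positivity))
  exact_mod_cast h2
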